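/- For every α ∈ (0,1), with p = (1+√5)/2 and q = 1, the Perron–Frobenius eigenvalue (spectral radius) of the nonnegative matrix M(α,p,q) equals λ(α) := (1/4)(2α√5 + 3α²√5 + 7α² + 4α + 3 − √5) + (1/4)√(f(α)), where f(α) := 14 + 28α²√5 + 72α² + 94α⁴ + 4α√5 + 4α − 6√5 + 172α³ + 76α³√5 + 42α⁴√5. -/

import Mathlib

noncomputable section

/-- The matrix `M(α, p, q)` of the recurrence `S(n+2) = S(n) · M`. -/
def Mmat (α p q : ℝ) : Matrix (Fin 3) (Fin 3) ℝ :=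
  !![p ^ (-2 : ℤ) * q ^ (-2 : ℤ) + α * q⁻¹, α * p * q⁻¹ + α ^ 2 * p ^ 4, 0;
     p ^ (-2 : ℤ) * q ^ (-2 : ℤ) + α * q⁻¹, α * p * q⁻¹ + α ^ 2 * p ^ 4 + α * p * q,
       α * q + p ^ (-2 : ℤ) * q ^ 2;
     0, α ^ 2 * p ^ 4 + α * p * q, α * q + p ^ (-2 : ℤ) * q ^ 2]

/-- The polynomial `f(α)` appearing under the square root in the formula for the
Perron–Frobenius eigenvalue. -/
def fpoly (α : ℝ) : ℝ :=
  14 + 28 * α ^ 2 * Real.sqrt 5 + 72 * α ^ 2 + 94 * α ^ 4 + 4 * α * Real.sqrt 5 + 4 * α -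
    6 * Real.sqrt 5 + 172 * α ^ 3 + 76 * α ^ 3 * Real.sqrt 5 + 42 * α ^ 4 * Real.sqrt 5

/-- `λ(α) = (1/4)(2α√5 + 3α²√5 + 7α² + 4α + 3 − √5) + (1/4)√(f(α))`. -/
def lam (α : ℝ) : ℝ :=
  (1 / 4) * (2 * α * Real.sqrt 5 + 3 * α ^ 2 * Real.sqrt 5 + 7 * α ^ 2 + 4 * α + 3 -
    Real.sqrt 5) + (1 / 4) * Real.sqrt (fpoly α)

set_option maxHeartbeats 1600000 in
/-- For every `α ∈ (0,1)`, with `p = (1+√5)/2` and `q = 1`, the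
Perron–Frobenius eigenvalue (spectral radius, i.e. the maximum of the absolute values of
the complex eigenvalues) of the nonnegative matrix `M(α,p,q)` equals `λ(α)`. -/
theorem spectralRadius_Mmat (α : ℝ) (hα0 : 0 < α) (hα1 : α < 1) :
    spectralRadius ℂ ((Mmat α ((1 + Real.sqrt 5) / 2) 1).map (Complex.ofReal ·)) =
      ENNReal.ofReal (lam α) := by
  have hs : Real.sqrt 5 ^ 2 = 5 := Real.sq_sqrt (by norm_num)
  have hs0 : (0:ℝ) ≤ Real.sqrt 5 := Real.sqrt_nonneg 5
  set s := Real.sqrt 5 with hsdef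
  have hs3 : s ≤ 3 := by nlinarith
  have hα0' : (0:ℝ) ≤ α := hα0.le
  have hF : fpoly α = 14 + 28*α^2*s + 72*α^2 + 94*α^4 + 4*α*s + 4*α - 6*s + 172*α^3
      + 76*α^3*s + 42*α^4*s := by
    simp only [fpoly, ← hsdef]
  have hprods : 0 ≤ α*s ∧ 0 ≤ α^2*s ∧ 0 ≤ α^3*s ∧ 0 ≤ α^4*s ∧ 0 ≤ α^2 ∧ 0 ≤ α^3 ∧ 0 ≤ α^4 := by
    refine ⟨mul_nonneg hα0' hs0, mul_nonneg (pow_nonneg hα0' 2) hs0,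
      mul_nonneg (pow_nonneg hα0' 3) hs0, mul_nonneg (pow_nonneg hα0' 4) hs0,
      pow_nonneg hα0' 2, pow_nonneg hα0' 3, pow_nonneg hα0' 4⟩
  obtain ⟨q1,q2,q3,q4,q5,q6,q7⟩ := hprods
  have h14 : 0 ≤ 14 - 6*s := by nlinarith [sq_nonneg (3-s)]
  have hF0 : 0 ≤ fpoly α := by rw [hF]; linarith
  have ht : Real.sqrt (fpoly α) ^ 2 = fpoly α := Real.sq_sqrt hF0
  have ht0 : (0:ℝ) ≤ Real.sqrt (fpoly α) := Real.sqrt_nonneg _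
  set t := Real.sqrt (fpoly α) with htdef
  have hlam : lam α = (1/4)*(2*α*s + 3*α^2*s + 7*α^2 + 4*α + 3 - s) + (1/4)*t := by
    simp only [lam, ← hsdef, ← htdef]
  -- t ≥ 3 - s
  have hF2 : (3 - s)^2 ≤ t^2 := by rw [ht, hF]; nlinarith
  have hts : 3 - s ≤ t := by nlinarith [hF2, ht0, hs3]
  set a0 : ℝ := (3-s)/2 + α with ha0def
  set m0 : ℝ := (1/4)*(2*α*s + 3*α^2*s + 7*α^2 + 4*α + 3 - s) - (1/4)*t with hm0def
  have ha0 : 0 ≤ a0 := by rw [ha0def]; linarith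
  have hale : a0 ≤ lam α := by
    rw [ha0def, hlam]
    linarith
  have hlam0 : 0 ≤ lam α := ha0.trans hale
  have hmle : |m0| ≤ lam α := by
    rw [abs_le, hm0def, hlam]
    constructor
    · linarith
    · linarith
  -- complex facts
  have hsc : (s:ℂ)^2 = 5 := by exact_mod_cast hs
  have hsumR : lam α + m0 = (2*α*s + 3*α^2*s + 7*α^2 + 4*α + 3 - s)/2 := by
    rw [hlam, hm0def]; ring
  have hprodR : lam α * m0 = ((2*α*s + 3*α^2*s + 7*α^2 + 4*α + 3 - s)^2 - fpoly α)/16 := by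
    rw [hlam, hm0def]
    linear_combination (-1/16 : ℝ) * ht
  have h1 : ((lam α : ℝ):ℂ) + ((m0:ℝ):ℂ)
      = (((2*α*s + 3*α^2*s + 7*α^2 + 4*α + 3 - s)/2 : ℝ):ℂ) := by exact_mod_cast hsumR
  have h2 : ((lam α : ℝ):ℂ) * ((m0:ℝ):ℂ)
      = ((((2*α*s + 3*α^2*s + 7*α^2 + 4*α + 3 - s)^2 - fpoly α)/16 : ℝ):ℂ) := by
    exact_mod_cast hprodR
  -- matrix simplification
  have hp2 : ((1+s)/2 : ℝ) ^ 2 = (3 + s)/2 := by linear_combination hs/4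
  have hz : ((1+s)/2 : ℝ) ^ (-2:ℤ) = (3 - s)/2 := by
    rw [show (-2:ℤ) = -(2:ℕ) by norm_num, zpow_neg, zpow_natCast, hp2]
    exact inv_eq_of_mul_eq_one_left (by linear_combination -hs/4)
  have hp4 : ((1+s)/2 : ℝ) ^ 4 = (7 + 3*s)/2 := by linear_combination ((s^2+4*s+11)/16) * hs
  have hM : Mmat α ((1+s)/2) 1 =
      !![(3-s)/2 + α, α*(1+s)/2 + α^2*(7+3*s)/2, 0;
         (3-s)/2 + α, α*(1+s)/2 + α^2*(7+3*s)/2 + α*(1+s)/2, (3-s)/2 + α;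
         0, α*(1+s)/2 + α^2*(7+3*s)/2, (3-s)/2 + α] := by
    unfold Mmat
    rw [hz, hp4]
    ext i j
    fin_cases i <;> fin_cases j <;> simp [Matrix.vecHead, Matrix.vecTail] <;> ring
  have hdet : ∀ μ : ℂ,
      (algebraMap ℂ (Matrix (Fin 3) (Fin 3) ℂ) μ -
        (Mmat α ((1+s)/2) 1).map (Complex.ofReal ·)).det
      = (μ - (a0 : ℝ)) *
        (μ^2 - (((2*α*s + 3*α^2*s + 7*α^2 + 4*α + 3 - s)/2 : ℝ)) * μ
          + ((((2*α*s + 3*α^2*s + 7*α^2 + 4*α + 3 - s)^2 - fpoly α)/16 : ℝ))) := by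
    intro μ
    rw [hM, ha0def, hF]
    simp [Matrix.det_fin_three, Matrix.sub_apply, Matrix.map_apply,
      Matrix.algebraMap_matrix_apply, Matrix.vecHead, Matrix.vecTail]
    linear_combination ((7/16)*(α:ℂ)^2*(s:ℂ) - (3/8)*(α:ℂ)^3*(s:ℂ) + (1/8)*(α:ℂ)*(s:ℂ)
      - (9/32)*(α:ℂ)^4*(s:ℂ) - (1/32)*(s:ℂ) + (1/4)*(α:ℂ)*μ - (1/16)*μ
      - (25/16)*(α:ℂ)^2 + (1/4)*(α:ℂ)^3 + (7/8)*(α:ℂ)^2*μ - (3/4)*(α:ℂ)^3*μ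
      - (9/16)*(α:ℂ)^4*μ + (51/32)*(α:ℂ)^4 - (5/16)*(α:ℂ) + (9/16)*(α:ℂ)^5 + 3/32) * hsc
  have hquad : ∀ μ : ℂ,
      μ^2 - (((2*α*s + 3*α^2*s + 7*α^2 + 4*α + 3 - s)/2 : ℝ)) * μ
          + ((((2*α*s + 3*α^2*s + 7*α^2 + 4*α + 3 - s)^2 - fpoly α)/16 : ℝ))
      = (μ - (lam α : ℝ)) * (μ - (m0 : ℝ)) := by
    intro μ
    linear_combination μ * h1 - h2
  have hspec : spectrum ℂ ((Mmat α ((1+s)/2) 1).map (Complex.ofReal ·))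
      = {((a0:ℝ):ℂ), ((lam α : ℝ):ℂ), ((m0:ℝ):ℂ)} := by
    ext μ
    rw [spectrum.mem_iff, Matrix.isUnit_iff_isUnit_det, isUnit_iff_ne_zero, not_not,
      hdet μ, hquad μ]
    simp only [mul_eq_zero, sub_eq_zero, Set.mem_insert_iff, Set.mem_singleton_iff]
  rw [spectralRadius, hspec, iSup_insert, iSup_insert, iSup_singleton]
  simp only [Complex.nnnorm_real, ← enorm_eq_nnnorm, Real.enorm_eq_ofReal_abs]
  rw [abs_of_nonneg ha0, abs_of_nonneg hlam0,
    sup_eq_left.mpr (ENNReal.ofReal_le_ofReal hmle),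
    sup_eq_right.mpr (ENNReal.ofReal_le_ofReal hale)]

end
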